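/- Let p and p_w be probability mass functions on a finite type V of cardinality N, let C > 0, α > 0, let w ≥ 1 be a natural number with TV(p, p_w) ≤ C·w^{−α}, and let μ ∈ (0, 1) satisfy C·w^{−α} ≤ μ/(2N). Define the smoothed reconstruction p^{μ,w}(x) := (1−μ)·p_w(x) + μ/N. Then KL(p‖p^{μ,w}) ≤ (2N/μ)·(C·w^{−α} + μ)². -/

import Mathlib

open Finset

/-- Total variation distance between two pmfs on a finite type. -/
noncomputable def TV {V : Type*} [Fintype V] (p q : V → ℝ) : ℝ :=
  (1 / 2) * ∑ x, |p x - q x|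

/-- Kullback–Leibler divergence between two pmfs on a finite type. -/
noncomputable def KL {V : Type*} [Fintype V] (p q : V → ℝ) : ℝ :=
  ∑ x, p x * Real.log (p x / q x)

/-- Polynomial KL form of truncation sensitivity: with
`TV(p, p_w) ≤ C·w^{−α}` and smoothing level `μ ∈ (0,1)` satisfying
`C·w^{−α} ≤ μ/(2N)`, the smoothed reconstruction
`p^{μ,w} = (1−μ)·p_w + μ/N` satisfies `KL(p‖p^{μ,w}) ≤ (2N/μ)·(C·w^{−α} + μ)²`. -/
theorem poly_mixing_KL {V : Type*} [Fintype V] [Nonempty V]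
    (p pw : V → ℝ) (C α μ : ℝ) (w : ℕ)
    (hw : 1 ≤ w) (hC : 0 < C) (hα : 0 < α) (hμ : μ ∈ Set.Ioo (0 : ℝ) 1)
    (hp0 : ∀ x, 0 ≤ p x) (hp1 : ∑ x, p x = 1)
    (hq0 : ∀ x, 0 ≤ pw x) (hq1 : ∑ x, pw x = 1)
    (hTV : TV p pw ≤ C * (w : ℝ) ^ (-α))
    (hsmall : C * (w : ℝ) ^ (-α) ≤ μ / (2 * (Fintype.card V : ℝ))) :
    KL p (fun x => (1 - μ) * pw x + μ / (Fintype.card V : ℝ)) ≤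
      (2 * (Fintype.card V : ℝ) / μ) * (C * (w : ℝ) ^ (-α) + μ) ^ 2 := by
  obtain ⟨hμ0, hμ1⟩ := hμ
  set N : ℝ := (Fintype.card V : ℝ) with hNdef
  have hN : (0:ℝ) < N := by
    rw [hNdef]
    exact_mod_cast Fintype.card_pos
  set ε := C * (w : ℝ) ^ (-α) with hεdef
  have hε : 0 < ε := by positivity
  set q : V → ℝ := fun x => (1 - μ) * pw x + μ / N with hqdef
  have hqlb : ∀ x, μ / N ≤ q x := by
    intro x
    have : 0 ≤ (1 - μ) * pw x := mul_nonneg (by linarith) (hq0 x)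
    simp only [hqdef]; linarith
  have hqpos : ∀ x, 0 < q x := fun x => lt_of_lt_of_le (by positivity) (hqlb x)
  have hcardN : ∑ _x : V, (1:ℝ) / N = 1 := by
    rw [Finset.sum_const, nsmul_eq_mul, Finset.card_univ, ← hNdef]
    field_simp
  have hqsum : ∑ x, q x = 1 := by
    have h1 : ∑ x : V, q x = (1 - μ) * (∑ x, pw x) + μ * ∑ _x : V, (1:ℝ) / N := by
      simp only [hqdef]
      rw [Finset.sum_add_distrib, ← Finset.mul_sum]
      congr 1
      rw [Finset.mul_sum]
      exact Finset.sum_congr rfl fun x _ => div_eq_mul_one_div _ _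
    rw [h1, hq1, hcardN]
    ring
  -- pointwise bound by TV
  have hsum0 : ∑ y, (p y - q y) = 0 := by
    rw [Finset.sum_sub_distrib, hp1, hqsum]; ring
  have habs : ∑ y, |p y - q y| = 2 * TV p q := by
    simp only [TV]; ring
  have hmaxpos : ∑ y, max (p y - q y) 0 = TV p q := by
    have h : ∀ y : V, max (p y - q y) 0 = ((p y - q y) + |p y - q y|) / 2 := by
      intro y
      rcases le_total (p y - q y) 0 with h | h
      · rw [max_eq_right h, abs_of_nonpos h]; ring
      · rw [max_eq_left h, abs_of_nonneg h]; ring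
    rw [Finset.sum_congr rfl fun y _ => h y, ← Finset.sum_div, Finset.sum_add_distrib,
      hsum0, habs]
    ring
  have hmaxneg : ∑ y, max (q y - p y) 0 = TV p q := by
    have h : ∀ y : V, max (q y - p y) 0 = (-(p y - q y) + |p y - q y|) / 2 := by
      intro y
      rcases le_total (p y - q y) 0 with h | h
      · rw [max_eq_left (by linarith), abs_of_nonpos h]; ring
      · rw [max_eq_right (by linarith), abs_of_nonneg h]; ring
    rw [Finset.sum_congr rfl fun y _ => h y, ← Finset.sum_div, Finset.sum_add_distrib,
      Finset.sum_neg_distrib, hsum0, habs]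
    ring
  have hpt : ∀ x, |p x - q x| ≤ TV p q := by
    intro x
    rw [abs_le]
    constructor
    · have h2 : max (q x - p x) 0 ≤ ∑ y, max (q y - p y) 0 :=
        Finset.single_le_sum (f := fun y => max (q y - p y) 0)
          (fun y _ => le_max_right _ _) (Finset.mem_univ x)
      rw [hmaxneg] at h2
      have h1 : q x - p x ≤ max (q x - p x) 0 := le_max_left _ _
      linarith
    · have h2 : max (p x - q x) 0 ≤ ∑ y, max (p y - q y) 0 :=
        Finset.single_le_sum (f := fun y => max (p y - q y) 0)
          (fun y _ => le_max_right _ _) (Finset.mem_univ x)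
      rw [hmaxpos] at h2
      have h1 : p x - q x ≤ max (p x - q x) 0 := le_max_left _ _
      linarith
  have hTVq : 0 ≤ TV p q := le_trans (abs_nonneg _) (hpt (Classical.arbitrary V))
  -- sum of squares bound
  have hsq : ∑ x, (p x - q x) ^ 2 ≤ 2 * TV p q ^ 2 := by
    have hterm : ∀ x : V, (p x - q x) ^ 2 ≤ TV p q * |p x - q x| := by
      intro x
      have h : (p x - q x) ^ 2 = |p x - q x| * |p x - q x| := by
        rw [← abs_mul, abs_of_nonneg (mul_self_nonneg _)]; ring
      rw [h]
      exact mul_le_mul_of_nonneg_right (hpt x) (abs_nonneg _)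
    calc ∑ x, (p x - q x) ^ 2 ≤ ∑ x, TV p q * |p x - q x| :=
          Finset.sum_le_sum fun x _ => hterm x
      _ = TV p q * ∑ x, |p x - q x| := by rw [Finset.mul_sum]
      _ = 2 * TV p q ^ 2 := by rw [habs]; ring
  -- KL ≤ chi-square
  have hKL : KL p q ≤ ∑ x, (p x - q x) ^ 2 / q x := by
    have hterm : ∀ x : V, p x * Real.log (p x / q x) ≤ p x ^ 2 / q x - p x := by
      intro x
      rcases eq_or_lt_of_le (hp0 x) with h | h
      · simp [← h]
      · have hd : 0 < p x / q x := div_pos h (hqpos x)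
        have hlog := Real.log_le_sub_one_of_pos hd
        have hmul := mul_le_mul_of_nonneg_left hlog (le_of_lt h)
        have hqne := (hqpos x).ne'
        calc p x * Real.log (p x / q x) ≤ p x * (p x / q x - 1) := hmul
          _ = p x ^ 2 / q x - p x := by field_simp
    have h1 : KL p q ≤ ∑ x, (p x ^ 2 / q x - p x) := Finset.sum_le_sum fun x _ => hterm x
    have h2 : ∑ x, (p x - q x) ^ 2 / q x = ∑ x, (p x ^ 2 / q x - p x) := by
      have e : ∀ x : V, (p x - q x) ^ 2 / q x = (p x ^ 2 / q x - p x) + (q x - p x) := by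
        intro x
        have hqne := (hqpos x).ne'
        field_simp
        ring
      rw [Finset.sum_congr rfl fun x _ => e x, Finset.sum_add_distrib]
      have hz : ∑ x, (q x - p x) = 0 := by
        rw [Finset.sum_sub_distrib, hqsum, hp1]; ring
      rw [hz]; ring
    linarith
  -- chi-square ≤ (N/μ) * sum of squares
  have hchi : ∑ x, (p x - q x) ^ 2 / q x ≤ (N / μ) * ∑ x, (p x - q x) ^ 2 := by
    rw [Finset.mul_sum]
    refine Finset.sum_le_sum fun x _ => ?_
    calc (p x - q x) ^ 2 / q x ≤ (p x - q x) ^ 2 / (μ / N) :=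
          div_le_div_of_nonneg_left (by positivity) (by positivity) (hqlb x)
      _ = N / μ * (p x - q x) ^ 2 := by
          rw [div_div_eq_mul_div]; ring
  -- TV p q ≤ ε + μ
  have hTVbound : TV p q ≤ ε + μ := by
    have hptw : ∀ x : V, |p x - q x| ≤ |p x - pw x| + μ * (pw x + 1 / N) := by
      intro x
      have heq : p x - q x = (p x - pw x) + μ * (pw x - 1 / N) := by
        simp only [hqdef]; field_simp; ring
      have habs2 : |pw x - 1 / N| ≤ pw x + 1 / N := by
        rw [abs_le]
        have h2 : (0:ℝ) < 1 / N := by positivity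
        exact ⟨by linarith [hq0 x], by linarith⟩
      calc |p x - q x| ≤ |p x - pw x| + |μ * (pw x - 1 / N)| := by
            rw [heq]; exact abs_add_le _ _
        _ ≤ |p x - pw x| + μ * (pw x + 1 / N) := by
            rw [abs_mul, abs_of_nonneg hμ0.le]
            have := mul_le_mul_of_nonneg_left habs2 hμ0.le
            linarith
    have hs : ∑ x, |p x - q x| ≤ ∑ x, (|p x - pw x| + μ * (pw x + 1 / N)) :=
      Finset.sum_le_sum fun x _ => hptw x
    have hs2 : ∑ x, (|p x - pw x| + μ * (pw x + 1 / N)) = 2 * TV p pw + 2 * μ := by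
      rw [Finset.sum_add_distrib, ← Finset.mul_sum, Finset.sum_add_distrib, hq1, hcardN]
      simp only [TV]
      ring
    have h2 : 2 * TV p q ≤ 2 * TV p pw + 2 * μ := by
      rw [← habs]; rw [hs2] at hs; exact hs
    have h3 : TV p pw ≤ ε := hTV
    linarith
  -- assemble
  calc KL p q ≤ ∑ x, (p x - q x) ^ 2 / q x := hKL
    _ ≤ (N / μ) * ∑ x, (p x - q x) ^ 2 := hchi
    _ ≤ (N / μ) * (2 * TV p q ^ 2) :=
        mul_le_mul_of_nonneg_left hsq (by positivity)
    _ ≤ (N / μ) * (2 * (ε + μ) ^ 2) := by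
        have : TV p q ^ 2 ≤ (ε + μ) ^ 2 := by nlinarith
        have h0 : (0:ℝ) ≤ N / μ := by positivity
        nlinarith
    _ = (2 * N / μ) * (ε + μ) ^ 2 := by ring
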